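/- arXiv:1710.08773 — 3 statements merged into one kernel-verified Lean document; each statement's English description precedes it below -/
import Mathlib

section
/- Let M be a 4×4 matrix over ℝ, let I1 = tr(M), and let T = M - (I1/4)·Id be its trace-free part. Then the characteristic polynomial of T equals X^4 + w2·X^2 + w3·X + w4, where, writing p2 = tr(M^2), p3 = tr(M^3), p4 = tr(M^4): w2 = -(1/2)·p2 + (1/8)·I1^2, w3 = -(1/3)·p3 + (1/4)·I1·p2 - (1/24)·I1^3, and w4 = (1/8)·p2^2 - (5/32)·I1^2·p2 + (5/256)·I1^4 - (1/4)·p4 + (1/4)·I1·p3. -/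
open Matrix Polynomial

private lemma eval_charpoly_aux {n : ℕ} (M : Matrix (Fin n) (Fin n) ℝ) (x : ℝ) :
    M.charpoly.eval x = (x • (1 : Matrix (Fin n) (Fin n) ℝ) - M).det := by
  rw [Matrix.charpoly, _root_.eval_det, matPolyEquiv_charmatrix]
  simp [Matrix.scalar, Algebra.algebraMap_eq_smul_one]

set_option maxHeartbeats 4000000 in
/-- the characteristic polynomial of the trace-free part
`T = M - (tr M / 4)·Id` of a 4×4 real matrix `M` is `X^4 + w2·X^2 + w3·X + w4`, where the
`wᵢ` are given in terms of `I1 = tr M` and `pₖ = tr(M^k)`. -/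
theorem charpoly_traceFreePart_fin4 (M : Matrix (Fin 4) (Fin 4) ℝ) :
    (M - (M.trace / 4) • (1 : Matrix (Fin 4) (Fin 4) ℝ)).charpoly =
      X ^ 4
        + C (-(1/2) * (M ^ 2).trace + (1/8) * M.trace ^ 2) * X ^ 2
        + C (-(1/3) * (M ^ 3).trace + (1/4) * M.trace * (M ^ 2).trace
              - (1/24) * M.trace ^ 3) * X
        + C ((1/8) * ((M ^ 2).trace) ^ 2 - (5/32) * M.trace ^ 2 * (M ^ 2).trace
              + (5/256) * M.trace ^ 4 - (1/4) * (M ^ 4).trace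
              + (1/4) * M.trace * (M ^ 3).trace) := by
  apply Polynomial.funext
  intro x
  rw [eval_charpoly_aux]
  simp only [eval_add, eval_mul, eval_pow, eval_C, eval_X]
  simp only [pow_succ, pow_zero, one_mul, Matrix.trace, Matrix.diag, Matrix.mul_apply,
    Matrix.det_succ_row_zero, Matrix.sub_apply, Matrix.smul_apply, Matrix.one_apply,
    Fin.sum_univ_succ, Finset.univ_unique, Finset.sum_singleton, Matrix.det_fin_one,
    Fin.isValue, smul_eq_mul, Matrix.submatrix_apply, Fin.succAbove, Fin.ext_iff, Fin.lt_def]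
  norm_num [Fin.succ, Fin.ext_iff]
  ring
end

section
/- Let Q be a 3×3 complex matrix with trace zero, and for each positive integer k set W_k = Re(tr(Q^k)). Then (W_2^2 - 2·W_4)·(W_2^2 + W_4)^2 + 18·W_3^2·(6·W_6 - 2·W_3^2 - 9·W_2·W_4 + 3·W_2^3) = (1/4)·Im((tr(Q^2))^3 - 6·(tr(Q^3))^2)·Im((tr(Q^2))^3 + 6·(tr(Q^3))^2). -/
open Matrix

lemma fin3_trace_pow4 (Q : Matrix (Fin 3) (Fin 3) ℂ) (hQ : Q.trace = 0) :
    2 * (Q ^ 4).trace = (Q ^ 2).trace ^ 2 := by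
  simp only [Matrix.trace, Matrix.diag, Fin.sum_univ_three, pow_succ, pow_zero, one_mul,
    Matrix.mul_apply] at hQ ⊢
  linear_combination (1*(Q 2 2)^3 + 4*(Q 1 2)*(Q 2 1)*(Q 2 2) + (-1)*(Q 1 1)*(Q 2 2)^2 + 4*(Q 1 1)*(Q 1 2)*(Q 2 1) + (-1)*(Q 1 1)^2*(Q 2 2) + 1*(Q 1 1)^3 + 4*(Q 0 2)*(Q 2 0)*(Q 2 2) + (-4)*(Q 0 2)*(Q 1 1)*(Q 2 0) + 8*(Q 0 2)*(Q 1 0)*(Q 2 1) + 8*(Q 0 1)*(Q 1 2)*(Q 2 0) + (-4)*(Q 0 1)*(Q 1 0)*(Q 2 2) + 4*(Q 0 1)*(Q 1 0)*(Q 1 1) + (-1)*(Q 0 0)*(Q 2 2)^2 + (-4)*(Q 0 0)*(Q 1 2)*(Q 2 1) + 2*(Q 0 0)*(Q 1 1)*(Q 2 2) + (-1)*(Q 0 0)*(Q 1 1)^2 + 4*(Q 0 0)*(Q 0 2)*(Q 2 0) + 4*(Q 0 0)*(Q 0 1)*(Q 1 0) + (-1)*(Q 0 0)^2*(Q 2 2)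 + (-1)*(Q 0 0)^2*(Q 1 1) + 1*(Q 0 0)^3) * hQ

lemma fin3_trace_pow6 (Q : Matrix (Fin 3) (Fin 3) ℂ) (hQ : Q.trace = 0) :
    12 * (Q ^ 6).trace = 3 * (Q ^ 2).trace ^ 3 + 4 * (Q ^ 3).trace ^ 2 := by
  simp only [Matrix.trace, Matrix.diag, Fin.sum_univ_three, pow_succ, pow_zero, one_mul,
    Matrix.mul_apply] at hQ ⊢
  linear_combination (5*(Q 2 2)^5 + 30*(Q 1 2)*(Q 2 1)*(Q 2 2)^3 + 36*(Q 1 2)^2*(Q 2 1)^2*(Q 2 2) + (-5)*(Q 1 1)*(Q 2 2)^4 + 18*(Q 1 1)*(Q 1 2)*(Q 2 1)*(Q 2 2)^2 + 36*(Q 1 1)*(Q 1 2)^2*(Q 2 1)^2 + (-4)*(Q 1 1)^2*(Q 2 2)^3 + 18*(Q 1 1)^2*(Q 1 2)*(Q 2 1)*(Q 2 2) + (-4)*(Q 1 1)^3*(Q 2 2)^2 + 30*(Q 1 1)^3*(Q 1 2)*(Q 2 1) + (-5)*(Q 1 1)^4*(Q 2 2) + 5*(Q 1 1)^5 + 30*(Q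 0 2)*(Q 2 0)*(Q 2 2)^3 + 72*(Q 0 2)*(Q 1 2)*(Q 2 0)*(Q 2 1)*(Q 2 2) + (-30)*(Q 0 2)*(Q 1 1)*(Q 2 0)*(Q 2 2)^2 + (-6)*(Q 0 2)*(Q 1 1)^2*(Q 2 0)*(Q 2 2) + (-18)*(Q 0 2)*(Q 1 1)^3*(Q 2 0) + 48*(Q 0 2)*(Q 1 0)*(Q 2 1)*(Q 2 2)^2 + 72*(Q 0 2)*(Q 1 0)*(Q 1 2)*(Q 2 1)^2 + 24*(Q 0 2)*(Q 1 0)*(Q 1 1)*(Q 2 1)*(Q 2 2) + 48*(Q 0 2)*(Q 1 0)*(Q 1 1)^2*(Q 2 1) + 36*(Q 0 2)^2*(Q 2 0)^2*(Q 2 2) + (-36)*(Q 0 2)^2*(Q 1 1)*(Q 2 0)^2 + 72*(Q 0 2)^2*(Q 1 0)*(Q 2 0)*(Q 2 1) + 48*(Q 0 1)*(Q 1 2)*(Q 2 0)*(Q 2 2)^2 + 72*(Q 0 1)*(Q 1 2)^2*(Q 2 0)*(Q 2 1) + 24*(Q 0 1)*(Q 1 1)*(Q 1 2)*(Q 2 0)*(Q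 2 2) + 48*(Q 0 1)*(Q 1 1)^2*(Q 1 2)*(Q 2 0) + (-18)*(Q 0 1)*(Q 1 0)*(Q 2 2)^3 + (-6)*(Q 0 1)*(Q 1 0)*(Q 1 1)*(Q 2 2)^2 + 72*(Q 0 1)*(Q 1 0)*(Q 1 1)*(Q 1 2)*(Q 2 1) + (-30)*(Q 0 1)*(Q 1 0)*(Q 1 1)^2*(Q 2 2) + 30*(Q 0 1)*(Q 1 0)*(Q 1 1)^3 + 72*(Q 0 1)*(Q 0 2)*(Q 1 2)*(Q 2 0)^2 + 72*(Q 0 1)*(Q 0 2)*(Q 1 0)^2*(Q 2 1) + 72*(Q 0 1)^2*(Q 1 0)*(Q 1 2)*(Q 2 0) + (-36)*(Q 0 1)^2*(Q 1 0)^2*(Q 2 2) + 36*(Q 0 1)^2*(Q 1 0)^2*(Q 1 1) + (-5)*(Q 0 0)*(Q 2 2)^4 + (-30)*(Q 0 0)*(Q 1 2)*(Q 2 1)*(Q 2 2)^2 + (-36)*(Q 0 0)*(Q 1 2)^2*(Q 2 1)^2 + 10*(Q 0 0)*(Q 1 1)*(Q 2 2)^3 + 12*(Q 0 0)*(Q 1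 1)*(Q 1 2)*(Q 2 1)*(Q 2 2) + (-6)*(Q 0 0)*(Q 1 1)^2*(Q 2 2)^2 + (-30)*(Q 0 0)*(Q 1 1)^2*(Q 1 2)*(Q 2 1) + 10*(Q 0 0)*(Q 1 1)^3*(Q 2 2) + (-5)*(Q 0 0)*(Q 1 1)^4 + 18*(Q 0 0)*(Q 0 2)*(Q 2 0)*(Q 2 2)^2 + 12*(Q 0 0)*(Q 0 2)*(Q 1 1)*(Q 2 0)*(Q 2 2) + (-6)*(Q 0 0)*(Q 0 2)*(Q 1 1)^2*(Q 2 0) + 24*(Q 0 0)*(Q 0 2)*(Q 1 0)*(Q 2 1)*(Q 2 2) + 24*(Q 0 0)*(Q 0 2)*(Q 1 0)*(Q 1 1)*(Q 2 1) + 36*(Q 0 0)*(Q 0 2)^2*(Q 2 0)^2 + 24*(Q 0 0)*(Q 0 1)*(Q 1 2)*(Q 2 0)*(Q 2 2) + 24*(Q 0 0)*(Q 0 1)*(Q 1 1)*(Q 1 2)*(Q 2 0) + (-6)*(Q 0 0)*(Q 0 1)*(Q 1 0)*(Q 2 2)^2 + 12*(Q 0 0)*(Q 0 1)*(Q 1 0)*(Q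 1 1)*(Q 2 2) + 18*(Q 0 0)*(Q 0 1)*(Q 1 0)*(Q 1 1)^2 + 72*(Q 0 0)*(Q 0 1)*(Q 0 2)*(Q 1 0)*(Q 2 0) + 36*(Q 0 0)*(Q 0 1)^2*(Q 1 0)^2 + (-4)*(Q 0 0)^2*(Q 2 2)^3 + (-6)*(Q 0 0)^2*(Q 1 2)*(Q 2 1)*(Q 2 2) + (-6)*(Q 0 0)^2*(Q 1 1)*(Q 2 2)^2 + (-6)*(Q 0 0)^2*(Q 1 1)*(Q 1 2)*(Q 2 1) + (-6)*(Q 0 0)^2*(Q 1 1)^2*(Q 2 2) + (-4)*(Q 0 0)^2*(Q 1 1)^3 + 18*(Q 0 0)^2*(Q 0 2)*(Q 2 0)*(Q 2 2) + (-30)*(Q 0 0)^2*(Q 0 2)*(Q 1 1)*(Q 2 0) + 48*(Q 0 0)^2*(Q 0 2)*(Q 1 0)*(Q 2 1) + 48*(Q 0 0)^2*(Q 0 1)*(Q 1 2)*(Q 2 0) + (-30)*(Q 0 0)^2*(Q 0 1)*(Q 1 0)*(Q 2 2) + 18*(Q 0 0)^2*(Q 0 1)*(Q 1 0)*(Q 1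 1) + (-4)*(Q 0 0)^3*(Q 2 2)^2 + (-18)*(Q 0 0)^3*(Q 1 2)*(Q 2 1) + 10*(Q 0 0)^3*(Q 1 1)*(Q 2 2) + (-4)*(Q 0 0)^3*(Q 1 1)^2 + 30*(Q 0 0)^3*(Q 0 2)*(Q 2 0) + 30*(Q 0 0)^3*(Q 0 1)*(Q 1 0) + (-5)*(Q 0 0)^4*(Q 2 2) + (-5)*(Q 0 0)^4*(Q 1 1) + 5*(Q 0 0)^5) * hQ

/-- for a trace-free 3×3 complex matrix `Q`, with `W_k = Re(tr(Q^k))`,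
`(W₂² - 2W₄)(W₂² + W₄)² + 18W₃²(6W₆ - 2W₃² - 9W₂W₄ + 3W₂³)
  = (1/4)·Im((tr Q²)³ - 6(tr Q³)²)·Im((tr Q²)³ + 6(tr Q³)²)`. -/
theorem fin3_W2_identity (Q : Matrix (Fin 3) (Fin 3) ℂ) (hQ : Q.trace = 0) :
    ((((Q ^ 2).trace).re ^ 2 - 2 * ((Q ^ 4).trace).re)
          * ((((Q ^ 2).trace).re ^ 2 + ((Q ^ 4).trace).re) ^ 2)
        + 18 * (((Q ^ 3).trace).re) ^ 2
          * (6 * ((Q ^ 6).trace).re - 2 * (((Q ^ 3).trace).re) ^ 2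
              - 9 * ((Q ^ 2).trace).re * ((Q ^ 4).trace).re
              + 3 * (((Q ^ 2).trace).re) ^ 3)) =
      (1/4) * (((Q ^ 2).trace) ^ 3 - 6 * ((Q ^ 3).trace) ^ 2).im
        * (((Q ^ 2).trace) ^ 3 + 6 * ((Q ^ 3).trace) ^ 2).im := by
  have h4 := fin3_trace_pow4 Q hQ
  have h6 := fin3_trace_pow6 Q hQ
  set t2 := (Q ^ 2).trace with ht2
  set t3 := (Q ^ 3).trace with ht3
  set t4 := (Q ^ 4).trace with ht4
  set t6 := (Q ^ 6).trace with ht6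
  have h4re : 2 * t4.re = (t2 ^ 2).re := by rw [← h4]; simp
  have h4im : 2 * t4.im = (t2 ^ 2).im := by rw [← h4]; simp
  have h6re : 12 * t6.re = 3 * (t2 ^ 3).re + 4 * (t3 ^ 2).re := by
    have := congrArg Complex.re h6; simpa using this
  simp only [pow_succ, pow_zero, one_mul, Complex.mul_re, Complex.mul_im, Complex.sub_im,
    Complex.add_im, Complex.mul_im, Complex.re_ofNat, Complex.im_ofNat] at h4re h6re ⊢
  have ha : t4.re = (t2.re * t2.re - t2.im * t2.im) / 2 := by linarith
  have hb : t6.re = (3 * ((t2.re * t2.re - t2.im * t2.im) * t2.re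
      - (t2.re * t2.im + t2.im * t2.re) * t2.im)
      + 4 * (t3.re * t3.re - t3.im * t3.im)) / 12 := by linarith
  rw [ha, hb]; ring
end

section
/- Let Q be a 3×3 complex matrix with trace zero whose characteristic polynomial has a repeated root in ℂ (i.e., Q has an eigenvalue of algebraic multiplicity at least 2), and for each positive integer k set W_k = Re(tr(Q^k)). Then both invariants vanish: -11·W_2^3 + 33·W_2·W_4 - 18·W_6 = 0 and (W_2^2 - 2·W_4)·(W_2^2 + W_4)^2 + 18·W_3^2·(6·W_6 - 2·W_3^2 - 9·W_2·W_4 + 3·W_2^3) = 0. -/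
open Matrix Polynomial


lemma charpoly_fin_three (M : Matrix (Fin 3) (Fin 3) ℂ) :
    M.charpoly = X ^ 3 - C M.trace * X ^ 2
      + C ((M.trace ^ 2 - (M ^ 2).trace) / 2) * X - C M.det := by
  have h2 : (M ^ 2).trace = ∑ i : Fin 3, ∑ j : Fin 3, M i j * M j i := by
    simp [Matrix.trace, pow_two, Matrix.mul_apply, Matrix.diag]
  rw [Matrix.charpoly, Matrix.det_fin_three, h2, Matrix.trace_fin_three, Matrix.det_fin_three]
  simp only [charmatrix_apply_eq, charmatrix_apply_ne _ _ _ (by decide : (0:Fin 3) ≠ 1),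
    charmatrix_apply_ne _ _ _ (by decide : (0:Fin 3) ≠ 2),
    charmatrix_apply_ne _ _ _ (by decide : (1:Fin 3) ≠ 0),
    charmatrix_apply_ne _ _ _ (by decide : (1:Fin 3) ≠ 2),
    charmatrix_apply_ne _ _ _ (by decide : (2:Fin 3) ≠ 0),
    charmatrix_apply_ne _ _ _ (by decide : (2:Fin 3) ≠ 1),
    Fin.sum_univ_three]
  ring_nf
  simp only [C_add, C_sub, C_mul, C_neg]
  ring


/-- if a trace-free 3×3 complex matrix has an eigenvalue of algebraic
multiplicity at least 2, then both real invariants 𝒲₁ and 𝒲₂ vanish, where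
`W_k = Re(tr(Q^k))`. -/
theorem fin3_repeated_eigenvalue_invariants_vanish (Q : Matrix (Fin 3) (Fin 3) ℂ)
    (hQ : Q.trace = 0) (hrep : ∃ z : ℂ, 2 ≤ Q.charpoly.rootMultiplicity z) :
    (-11 * (((Q ^ 2).trace).re) ^ 3
        + 33 * ((Q ^ 2).trace).re * ((Q ^ 4).trace).re
        - 18 * ((Q ^ 6).trace).re = 0) ∧
      ((((Q ^ 2).trace).re ^ 2 - 2 * ((Q ^ 4).trace).re)
            * ((((Q ^ 2).trace).re ^ 2 + ((Q ^ 4).trace).re) ^ 2)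
          + 18 * (((Q ^ 3).trace).re) ^ 2
            * (6 * ((Q ^ 6).trace).re - 2 * (((Q ^ 3).trace).re) ^ 2
                - 9 * ((Q ^ 2).trace).re * ((Q ^ 4).trace).re
                + 3 * (((Q ^ 2).trace).re) ^ 3) = 0) := by
  obtain ⟨z, hz⟩ := hrep
  have hne : Q.charpoly ≠ 0 := (Matrix.charpoly_monic Q).ne_zero
  have hdvd : (X - C z) ^ 2 ∣ Q.charpoly :=
    dvd_trans (pow_dvd_pow _ hz) (Polynomial.pow_rootMultiplicity_dvd _ _)
  obtain ⟨g, hg⟩ := hdvd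
  have hmon2 : ((X - C z) ^ 2 : ℂ[X]).Monic := (monic_X_sub_C z).pow 2
  have hgmon : g.Monic := by
    have := Matrix.charpoly_monic Q
    rw [hg] at this
    exact hmon2.of_mul_monic_left this
  have hdeg : Q.charpoly.natDegree = 3 := by
    simp [Matrix.charpoly_natDegree_eq_dim]
  have hgdeg : g.natDegree = 1 := by
    have h := hdeg
    rw [hg, hmon2.natDegree_mul hgmon] at h
    have : ((X - C z) ^ 2 : ℂ[X]).natDegree = 2 := by
      simp [Polynomial.natDegree_pow]
    omega
  have hgeq : g = X + C (g.coeff 0) := hgmon.eq_X_add_C hgdeg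
  set w := g.coeff 0 with hw
  have hcp : Q.charpoly = X ^ 3 + C (w - 2 * z) * X ^ 2 + C (z ^ 2 - 2 * z * w) * X
      + C (z ^ 2 * w) := by
    rw [hg, hgeq]
    simp only [C_sub, C_mul, C_pow, map_ofNat]
    ring
  have hfin := charpoly_fin_three Q
  rw [hcp] at hfin
  have c2 : w - 2 * z = -Q.trace := by
    have := congrArg (fun p => Polynomial.coeff p 2) hfin
    simpa only [coeff_add, coeff_sub, coeff_C_mul, coeff_X_pow, coeff_X, coeff_C,
      coeff_X_pow, mul_one, mul_zero, add_zero, zero_add, sub_zero, zero_sub, if_true, if_false,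
      show (2:ℕ) ≠ 0 by decide, show (1:ℕ) ≠ 0 by decide, show (2:ℕ) ≠ 1 by decide,
      show ¬(2 = 3) by decide, show ¬(1 = 3) by decide, show ¬(1 = 2) by decide] using this
  have c1 : z ^ 2 - 2 * z * w = (Q.trace ^ 2 - (Q ^ 2).trace) / 2 := by
    have := congrArg (fun p => Polynomial.coeff p 1) hfin
    simpa only [coeff_add, coeff_sub, coeff_C_mul, coeff_X_pow, coeff_X, coeff_C,
      coeff_X_pow, mul_one, mul_zero, add_zero, zero_add, sub_zero, zero_sub, if_true, if_false,
      show (2:ℕ) ≠ 0 by decide, show (1:ℕ) ≠ 0 by decide, show (2:ℕ) ≠ 1 by decide,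
      show ¬(2 = 3) by decide, show ¬(1 = 3) by decide, show ¬(1 = 2) by decide] using this
  have hwz : w = 2 * z := by rw [hQ] at c2; linear_combination c2
  have ht2 : (Q ^ 2).trace = 6 * z ^ 2 := by
    rw [hwz, hQ] at c1
    linear_combination 2 * c1
  have hcp2 : Q.charpoly = X ^ 3 - C (3 * z ^ 2) * X + C (2 * z ^ 3) := by
    rw [hcp, hwz]
    simp only [C_sub, C_mul, C_pow, map_ofNat]
    ring
  have h0 := Matrix.aeval_self_charpoly Q
  rw [hcp2] at h0
  simp only [map_add, map_sub, Polynomial.aeval_mul, map_pow, aeval_X, aeval_C] at h0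
  simp only [← Algebra.smul_def] at h0
  simp only [Algebra.algebraMap_eq_smul_one] at h0
  have hCH : Q ^ 3 = (3 * z ^ 2) • Q - (2 * z ^ 3) • (1 : Matrix (Fin 3) (Fin 3) ℂ) := by
    linear_combination (norm := module) h0
  have ht3 : (Q ^ 3).trace = -6 * z ^ 3 := by
    rw [hCH, Matrix.trace_sub, Matrix.trace_smul, Matrix.trace_smul, Matrix.trace_one, hQ]
    simp
    ring
  have h4 : Q ^ 4 = (3 * z ^ 2) • Q ^ 2 - (2 * z ^ 3) • Q := by
    have : Q ^ 4 = Q ^ 3 * Q := by rw [← pow_succ]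
    rw [this, hCH, sub_mul, smul_mul_assoc, smul_mul_assoc, one_mul, ← pow_two]
  have ht4 : (Q ^ 4).trace = 18 * z ^ 4 := by
    rw [h4, Matrix.trace_sub, Matrix.trace_smul, Matrix.trace_smul, ht2, hQ]
    simp only [smul_eq_mul]
    ring
  have h6 : Q ^ 6 = (3 * z ^ 2) • Q ^ 4 - (2 * z ^ 3) • Q ^ 3 := by
    calc Q ^ 6 = Q ^ 3 * Q ^ 3 := by rw [← pow_add]
      _ = ((3 * z ^ 2) • Q - (2 * z ^ 3) • 1) * Q ^ 3 := by rw [hCH]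
      _ = (3 * z ^ 2) • (Q * Q ^ 3) - (2 * z ^ 3) • Q ^ 3 := by
          rw [sub_mul, smul_mul_assoc, smul_mul_assoc, one_mul]
      _ = (3 * z ^ 2) • Q ^ 4 - (2 * z ^ 3) • Q ^ 3 := by
          rw [show Q * Q ^ 3 = Q ^ 4 from (pow_succ' Q 3).symm]
  have ht6 : (Q ^ 6).trace = 66 * z ^ 6 := by
    rw [h6, Matrix.trace_sub, Matrix.trace_smul, Matrix.trace_smul, ht3, ht4]
    simp only [smul_eq_mul]
    ring
  rw [ht2, ht3, ht4, ht6]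
  constructor <;>
  · simp only [Complex.mul_re, Complex.mul_im, pow_succ, pow_zero, one_mul,
      Complex.re_ofNat, Complex.im_ofNat, Complex.neg_re, Complex.neg_im, Complex.one_re,
      Complex.one_im]
    ring
end
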